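/- Let K, M, T be positive integers with M ≤ K. For each round t ∈ {1,…,T} and each index k ∈ {1,…,K}, let UCB(t,k) and LCB(t,k) be real numbers, and let L*(k) be real numbers satisfying LCB(t,k) ≤ L*(k) ≤ UCB(t,k) for all t and k. Let k* be a minimizer of L*(k) over k ∈ {1,…,K} and set L⋆ = L*(k*). Suppose for each t a subset S_t ⊆ {1,…,K} with |S_t| = M is chosen that minimizes Σ_{k∈S} LCB(t,k) over all subsets S of size M, and an index i_t ∈ S_t is chosen that minimizes UCB(t,k) over k ∈ S_t. If v_1,…,v_T are real numbers with v_t ≤ UCB(t,i_t) for every t, then Σ_{t=1}^T (v_t − L⋆) ≤ Σ_{t : k*∈S_t} [UCB(t,k*) − LCB(t,k*)] + (1/M) Σ_{t=1}^T Σ_{k∈S_t} [UCB(t,k) − LCB(t,k)]. -/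
import Mathlib


open Finset

/-- Deterministic core of the pseudo-regret bound for the M-LCB meta-algorithm. -/
theorem mlcb_pseudo_regret_core
    (K M T : ℕ) (hK : 0 < K) (hM : 0 < M) (hT : 0 < T) (hMK : M ≤ K)
    (UCB LCB : Fin T → Fin K → ℝ) (Lstar : Fin K → ℝ)
    (hbracket : ∀ t k, LCB t k ≤ Lstar k ∧ Lstar k ≤ UCB t k)
    (kstar : Fin K) (hkstar : ∀ k, Lstar kstar ≤ Lstar k)
    (S : Fin T → Finset (Fin K))
    (hScard : ∀ t, (S t).card = M)
    (hSmin : ∀ t, ∀ S' : Finset (Fin K), S'.card = M →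
      ∑ k ∈ S t, LCB t k ≤ ∑ k ∈ S', LCB t k)
    (i : Fin T → Fin K) (hiS : ∀ t, i t ∈ S t)
    (himin : ∀ t, ∀ k ∈ S t, UCB t (i t) ≤ UCB t k)
    (v : Fin T → ℝ) (hv : ∀ t, v t ≤ UCB t (i t)) :
    ∑ t, (v t - Lstar kstar)
      ≤ (∑ t ∈ Finset.univ.filter (fun t => kstar ∈ S t),
            (UCB t kstar - LCB t kstar))
        + (1 / (M : ℝ)) * ∑ t, ∑ k ∈ S t, (UCB t k - LCB t k) := by
  have hMpos : (0:ℝ) < M := by exact_mod_cast hM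
  have hgnonneg : ∀ t, 0 ≤ (1 / (M : ℝ)) * ∑ k ∈ S t, (UCB t k - LCB t k) := by
    intro t
    apply mul_nonneg (by positivity)
    apply Finset.sum_nonneg
    intro k _
    have h := hbracket t k
    linarith [h.1, h.2]
  have key : ∀ t, v t - Lstar kstar ≤
      (if kstar ∈ S t then UCB t kstar - LCB t kstar else 0)
        + (1 / (M : ℝ)) * ∑ k ∈ S t, (UCB t k - LCB t k) := by
    intro t
    by_cases hks : kstar ∈ S t
    · simp only [hks, if_true]
      have h1 : v t ≤ UCB t kstar := le_trans (hv t) (himin t kstar hks)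
      have h2 := (hbracket t kstar).1
      have := hgnonneg t
      linarith
    · simp only [hks, if_false, zero_add]
      -- swap argument: for every j ∈ S t, LCB t j ≤ LCB t kstar
      have hswap : ∀ j ∈ S t, LCB t j ≤ LCB t kstar := by
        intro j hj
        have hcard : (insert kstar ((S t).erase j)).card = M := by
          rw [Finset.card_insert_of_notMem (fun h => hks (Finset.mem_of_mem_erase h)),
            Finset.card_erase_of_mem hj, hScard t]
          omega
        have h := hSmin t _ hcard
        rw [Finset.sum_insert (fun h => hks (Finset.mem_of_mem_erase h))] at h
        have herase : ∑ k ∈ (S t).erase j, LCB t k = (∑ k ∈ S t, LCB t k) - LCB t j := by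
          rw [Finset.sum_erase_eq_sub hj]
        rw [herase] at h
        linarith
      have hterm : ∀ j ∈ S t, v t - Lstar kstar ≤ UCB t j - LCB t j := by
        intro j hj
        have h1 : v t ≤ UCB t j := le_trans (hv t) (himin t j hj)
        have h2 : LCB t j ≤ Lstar kstar := le_trans (hswap j hj) (hbracket t kstar).1
        linarith
      have hsum : (M : ℝ) * (v t - Lstar kstar) ≤ ∑ k ∈ S t, (UCB t k - LCB t k) := by
        calc (M : ℝ) * (v t - Lstar kstar)
            = ∑ _k ∈ S t, (v t - Lstar kstar) := by
              rw [Finset.sum_const, hScard t, nsmul_eq_mul]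
          _ ≤ ∑ k ∈ S t, (UCB t k - LCB t k) := Finset.sum_le_sum hterm
      rw [← sub_nonneg]
      calc (0:ℝ) ≤ (1 / (M:ℝ)) * ((∑ k ∈ S t, (UCB t k - LCB t k)) - (M:ℝ) * (v t - Lstar kstar)) := by
            apply mul_nonneg (by positivity); linarith
        _ = (1 / (M:ℝ)) * ∑ k ∈ S t, (UCB t k - LCB t k) - (v t - Lstar kstar) := by
            field_simp
  calc ∑ t, (v t - Lstar kstar)
      ≤ ∑ t, ((if kstar ∈ S t then UCB t kstar - LCB t kstar else 0)
          + (1 / (M : ℝ)) * ∑ k ∈ S t, (UCB t k - LCB t k)) :=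
        Finset.sum_le_sum (fun t _ => key t)
    _ = (∑ t ∈ Finset.univ.filter (fun t => kstar ∈ S t),
            (UCB t kstar - LCB t kstar))
        + (1 / (M : ℝ)) * ∑ t, ∑ k ∈ S t, (UCB t k - LCB t k) := by
        rw [Finset.sum_add_distrib, Finset.sum_filter, Finset.mul_sum]
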